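/- For any U, V ∈ 𝓕 and any p ∈ 𝒫, ‖F(p, U) − F(p, V)‖_∞ ≤ d(U, V). -/

import Mathlib

/-- The upset of `A` within `[0,1]^K`: points of `[0,1]^K` dominating some point of `A`. -/
def upset (K : ℕ) (A : Set (Fin K → ℝ)) : Set (Fin K → ℝ) :=
  {x | x ∈ Set.Icc (0 : Fin K → ℝ) 1 ∧ ∃ y ∈ A, y ≤ x}

/-- Membership in the space `𝓕`: a nonempty Pareto frontier in `[0,1]^K`
(no element dominates a different element) whose upset is closed and convex. -/
def memF (K : ℕ) (V : Set (Fin K → ℝ)) : Prop :=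
  V.Nonempty ∧ V ⊆ Set.Icc (0 : Fin K → ℝ) 1 ∧
    (∀ u ∈ V, ∀ v ∈ V, u ≤ v → u = v) ∧
    IsClosed (upset K V) ∧ Convex ℝ (upset K V)

/-- The metric `d` on `𝓕`: Hausdorff distance (for the ℓ∞ norm) between upsets. -/
noncomputable def dF (K : ℕ) (U V : Set (Fin K → ℝ)) : ℝ :=
  Metric.hausdorffDist (upset K U) (upset K V)

/-- The parameter set `𝒫`: vectors in `[0,1]^K` with at least one zero coordinate. -/
def paramSet (K : ℕ) : Set (Fin K → ℝ) :=
  {p | (∀ i, p i ∈ Set.Icc (0:ℝ) 1) ∧ ∃ k, p k = 0}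

/-- `F(p,V) = t*·1 + p`, where `t*` is the smallest `t` such that `t·1 + p` lies in
the upset of `V` taken in `[0,2]^K`. -/
noncomputable def Fparam (K : ℕ) (p : Fin K → ℝ) (V : Set (Fin K → ℝ)) : Fin K → ℝ :=
  fun i =>
    sInf {t : ℝ | (∀ j, 0 ≤ t + p j ∧ t + p j ≤ 2) ∧ ∃ y ∈ V, ∀ j, y j ≤ t + p j} + p i

-- scratch: S
def Sset (K : ℕ) (p : Fin K → ℝ) (V : Set (Fin K → ℝ)) : Set ℝ :=
  {t : ℝ | (∀ j, 0 ≤ t + p j ∧ t + p j ≤ 2) ∧ ∃ y ∈ V, ∀ j, y j ≤ t + p j}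

lemma one_mem (K : ℕ) (p : Fin K → ℝ) (V : Set (Fin K → ℝ)) (hV : memF K V)
    (hp : p ∈ paramSet K) : (1:ℝ) ∈ Sset K p V := by
  obtain ⟨⟨y, hy⟩, hVi, -⟩ := hV
  refine ⟨fun j => ⟨by linarith [(hp.1 j).1], by linarith [(hp.1 j).2]⟩, y, hy, fun j => ?_⟩
  have := (hVi hy).2 j
  have := (hp.1 j).1
  simp only [Pi.one_apply] at *
  linarith

lemma nonneg_of_mem (K : ℕ) (p : Fin K → ℝ) (V : Set (Fin K → ℝ))
    (hp : p ∈ paramSet K) {t : ℝ} (ht : t ∈ Sset K p V) : 0 ≤ t := by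
  obtain ⟨k, hk⟩ := hp.2
  have := (ht.1 k).1
  linarith [hk ▸ this]

lemma upset_nonempty (K : ℕ) (V : Set (Fin K → ℝ)) (hV : memF K V) :
    (upset K V).Nonempty := by
  obtain ⟨⟨y, hy⟩, hVi, -⟩ := hV
  exact ⟨y, hVi hy, y, hy, le_refl y⟩

lemma upset_bounded (K : ℕ) (V : Set (Fin K → ℝ)) :
    Bornology.IsBounded (upset K V) := by
  refine Metric.isBounded_closedBall (x := (0 : Fin K → ℝ)) (r := 1) |>.subset ?_
  intro x hx
  simp only [Metric.mem_closedBall, dist_zero_right]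
  refine pi_norm_le_iff_of_nonneg zero_le_one |>.2 fun i => ?_
  rw [Real.norm_eq_abs, abs_le]
  constructor
  · have h0 : (0:ℝ) ≤ x i := by have := hx.1.1 i; simpa using this
    linarith
  · simpa using hx.1.2 i

lemma key (K : ℕ) (U V : Set (Fin K → ℝ)) (hU : memF K U) (hV : memF K V)
    (p : Fin K → ℝ) (hp : p ∈ paramSet K) :
    sInf (Sset K p U) ≤ sInf (Sset K p V) + dF K U V := by
  have hne : (Sset K p V).Nonempty := ⟨1, one_mem K p V hV hp⟩
  have hbdU : BddBelow (Sset K p U) := ⟨0, fun t ht => nonneg_of_mem K p U hp ht⟩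
  have hd0 : 0 ≤ dF K U V := Metric.hausdorffDist_nonneg
  have hEd : EMetric.hausdorffEdist (upset K V) (upset K U) ≠ ⊤ :=
    Metric.hausdorffEdist_ne_top_of_nonempty_of_bounded (upset_nonempty K V hV)
      (upset_nonempty K U hU) (upset_bounded K V) (upset_bounded K U)
  refine le_of_forall_pos_le_add fun ε hε => ?_
  obtain ⟨t, htS, htlt⟩ := Real.lt_sInf_add_pos hne (half_pos hε)
  obtain ⟨hbd, y, hyV, hyle⟩ := htS
  have ht0 : 0 ≤ t := nonneg_of_mem K p V hp ⟨hbd, y, hyV, hyle⟩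
  set x : Fin K → ℝ := fun j => min (t + p j) 1 with hx
  have hxup : x ∈ upset K V := by
    refine ⟨⟨fun j => le_min (hbd j).1 zero_le_one, fun j => min_le_right _ _⟩, y, hyV, fun j => ?_⟩
    exact le_min (hyle j) ((hV.2.1 hyV).2 j)
  have hinf : Metric.infDist x (upset K U) ≤ dF K U V := by
    have := Metric.infDist_le_hausdorffDist_of_mem hxup hEd
    rwa [Metric.hausdorffDist_comm] at this
  obtain ⟨u, huU, hdu⟩ := (Metric.infDist_lt_iff (upset_nonempty K U hU)).1
    (lt_of_le_of_lt hinf (by linarith : dF K U V < dF K U V + ε/2))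
  obtain ⟨hu01, z, hzU, hzu⟩ := huU
  set D := dF K U V + ε/2 with hD
  set t' := min (t + D) 1 with ht'
  have ht'S : t' ∈ Sset K p U := by
    have ht'0 : 0 ≤ t' := le_min (by rw [hD]; linarith) zero_le_one
    refine ⟨fun j => ⟨by linarith [(hp.1 j).1], ?_⟩, z, hzU, fun j => ?_⟩
    · have : t' ≤ 1 := min_le_right _ _
      linarith [(hp.1 j).2]
    · have h1 : |u j - x j| ≤ dist u x := by
        simpa [Real.dist_eq] using dist_le_pi_dist u x j
      have h2 : dist u x < D := by rwa [dist_comm] at hdu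
      have h3 : u j ≤ x j + D := by
        have := abs_le.1 h1
        linarith
      have hz1 : z j ≤ 1 := by simpa using (hU.2.1 hzU).2 j
      rcases le_total (t + D) 1 with hc | hc
      · have : t' = t + D := min_eq_left hc
        have hxj : x j ≤ t + p j := min_le_left _ _
        have := hzu j
        linarith
      · have : t' = 1 := min_eq_right hc
        linarith [(hp.1 j).1]
  have h1 : sInf (Sset K p U) ≤ t' := csInf_le hbdU ht'S
  have h2 : t' ≤ t + D := min_le_left _ _
  rw [hD] at h2
  linarith


/-- for `U, V ∈ 𝓕` and `p ∈ 𝒫`, `‖F(p,U) − F(p,V)‖_∞ ≤ d(U,V)`. -/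
theorem Fparam_lipschitz {K : ℕ} (U V : Set (Fin K → ℝ))
    (hU : memF K U) (hV : memF K V) (p : Fin K → ℝ) (hp : p ∈ paramSet K) :
    ‖Fparam K p U - Fparam K p V‖ ≤ dF K U V := by
  have h1 := key K U V hU hV p hp
  have h2 := key K V U hV hU p hp
  have hd : dF K V U = dF K U V := Metric.hausdorffDist_comm
  rw [hd] at h2
  have hd0 : 0 ≤ dF K U V := Metric.hausdorffDist_nonneg
  refine pi_norm_le_iff_of_nonneg hd0 |>.2 fun i => ?_
  simp only [Pi.sub_apply]
  show |sInf (Sset K p U) + p i - (sInf (Sset K p V) + p i)| ≤ _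
  rw [abs_le]
  constructor <;> linarith
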